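/- Let K ⊆ ℝ^n be a closed convex cone. Then the affine hull of its polar satisfies aff(K°) = (lin(K))^⊥, where lin(K) = K ∩ (−K) is the lineality space of K. -/

import Mathlib

open Matrix Set MeasureTheory
open scoped RealInnerProductSpace

noncomputable section

/-- `E d` is Euclidean space `ℝ^d`. -/
abbrev E (d : ℕ) := EuclideanSpace ℝ (Fin d)

/-- Matrix-vector multiplication as a map between Euclidean spaces. -/
def mulVecE {m n : ℕ} (B : Matrix (Fin m) (Fin n) ℝ) (y : E n) : E m :=
  Matrix.toEuclideanLin B y

/-- The polar of a set `K`: `K° = {v | ⟪v, w⟫ ≤ 0 for all w ∈ K}`. -/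
def polarCone {d : ℕ} (K : Set (E d)) : Set (E d) :=
  {v | ∀ w ∈ K, ⟪v, w⟫ ≤ 0}

/-- The horizon cone of `C`: directions `x` with `w + τ • x ∈ C` for all `w ∈ C`, `τ ≥ 0`. -/
def horizonCone {d : ℕ} (C : Set (E d)) : Set (E d) :=
  {x | ∀ w ∈ C, ∀ τ : ℝ, 0 ≤ τ → w + τ • x ∈ C}

/-- The null space of a matrix `M`, as a set of vectors. -/
def nullSet {d : ℕ} (M : Matrix (Fin d) (Fin d) ℝ) : Set (E d) :=
  {w | mulVecE M w = 0}

/-- A set is polyhedral if it is of the form `{u | Aᵀ u ≤ a}` (componentwise). -/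
def IsPolyhedral {d : ℕ} (U : Set (E d)) : Prop :=
  ∃ (k : ℕ) (A : Matrix (Fin d) (Fin k) ℝ) (a : Fin k → ℝ),
    U = {u | ∀ i, mulVecE Aᵀ u i ≤ a i}

/-- The piecewise linear-quadratic penalty
`θ_{U,M}(w) = sup_{u ∈ U} (⟪u, w⟫ - (1/2) ⟪u, M u⟫)`, valued in `ℝ ∪ {±∞}`. -/
def theta {m : ℕ} (U : Set (E m)) (M : Matrix (Fin m) (Fin m) ℝ) (w : E m) : EReal :=
  ⨆ u ∈ U, ((⟪u, w⟫ - (1 / 2) * ⟪u, mulVecE M u⟫ : ℝ) : EReal)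

/-- `cone U = {t • u | u ∈ U, t ≥ 0}`. -/
def coneOf {d : ℕ} (U : Set (E d)) : Set (E d) :=
  {w | ∃ u ∈ U, ∃ t : ℝ, 0 ≤ t ∧ w = t • u}

/-- A function `ρ : ℝ^n → ℝ ∪ {+∞}` is coercive if `ρ(y) → +∞` as `‖y‖ → ∞`. -/
def Coercive {n : ℕ} (ρ : E n → EReal) : Prop :=
  ∀ C : ℝ, ∃ R : ℝ, ∀ y : E n, R ≤ ‖y‖ → (C : EReal) ≤ ρ y


/-- for a closed convex cone K, aff (K_polar) = (lin K)-perp,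
where lin K = K ∩ -K. -/
theorem affine_hull_of_polar {n : ℕ}
    (K : Set (E n)) (hKclosed : IsClosed K) (hKconvex : Convex ℝ K)
    (hKcone : ∀ t : ℝ, 0 ≤ t → ∀ w ∈ K, t • w ∈ K) :
    (affineSpan ℝ (polarCone K) : Set (E n)) =
      ((Submodule.span ℝ (K ∩ -K))ᗮ : Set (E n)) := by

  classical
  -- `0 ∈ polarCone K`, so the affine span is the linear span.
  have h0 : (0 : E n) ∈ polarCone K := by
    intro w _; simp
  have haff : (affineSpan ℝ (polarCone K) : Set (E n))
      = (Submodule.span ℝ (polarCone K) : Set (E n)) := by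
    rw [← affineSpan_insert_zero, Set.insert_eq_self.2 h0]
  rw [haff]
  set P := Submodule.span ℝ (polarCone K) with hP
  set L := Submodule.span ℝ (K ∩ -K) with hL
  -- every element of the polar cone is orthogonal to K ∩ -K
  have hperp : ∀ v ∈ polarCone K, ∀ w ∈ K ∩ -K, ⟪w, v⟫ = 0 := by
    intro v hv w hw
    have h1 : ⟪v, w⟫ ≤ 0 := hv w hw.1
    have h2 : ⟪v, -w⟫ ≤ 0 := hv (-w) (by simpa using hw.2)
    rw [inner_neg_right] at h2
    rw [real_inner_comm]
    linarith
  -- P ≤ Lᗮ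
  have hPL : P ≤ Lᗮ := by
    rw [hP, Submodule.span_le]
    intro v hv
    rw [SetLike.mem_coe, Submodule.mem_orthogonal]
    intro u hu
    induction hu using Submodule.span_induction with
    | mem w hw => exact hperp v hv w hw
    | zero => simp
    | add x y _ _ hx hy => rw [inner_add_left, hx, hy, add_zero]
    | smul c x _ hx => rw [inner_smul_left, hx, mul_zero]
  -- key: Pᗮ ≤ L
  have hperp2 : ∀ x ∈ Pᗮ, ∀ v ∈ polarCone K, ⟪v, x⟫ = 0 := by
    intro x hx v hv
    exact (Submodule.mem_orthogonal P x).1 hx v (Submodule.subset_span hv)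
  have hPperpL : Pᗮ ≤ L := by
    intro x hx
    rcases Set.eq_empty_or_nonempty K with hKe | hKne
    · -- K empty: polar cone is everything, so x = 0
      have hxx : ⟪x, x⟫ = 0 := hperp2 x hx x (by intro w hw; simp [hKe] at hw)
      have : x = 0 := by
        have := inner_self_eq_zero (𝕜 := ℝ).1 hxx
        exact this
      simp [this]
    · -- K nonempty: bipolar theorem
      let Kc : ConvexCone ℝ (E n) :=
        { carrier := K
          smul_mem' := fun c hc w hw => hKcone c hc.le w hw
          add_mem' := fun w1 hw1 w2 hw2 => by
            have hmid : (1/2 : ℝ) • w1 + (1/2 : ℝ) • w2 ∈ K :=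
              hKconvex hw1 hw2 (by norm_num) (by norm_num) (by norm_num)
            have := hKcone 2 (by norm_num) _ hmid
            simpa [smul_add, smul_smul] using this }
       
      have hmem : ∀ y : E n, (∀ z, (∀ w ∈ K, 0 ≤ ⟪w, z⟫) →
          0 ≤ ⟪z, y⟫) → y ∈ K := by
        intro y hy
        by_contra hyK
        obtain ⟨w0, hw0⟩ := hKne
        let C : ProperCone ℝ (E n) :=
          { carrier := K
            add_mem' := fun hw1 hw2 => Kc.add_mem' hw1 hw2
            zero_mem' := by simpa using hKcone 0 le_rfl w0 hw0
            smul_mem' := fun c w hw => hKcone c c.2 w hw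
            isClosed' := hKclosed }
        obtain ⟨z, hz, hzy⟩ := C.hyperplane_separation' (x₀ := y) hyK
        have := hy z hz
        rw [real_inner_comm] at this
        linarith
      have hxK : x ∈ K := by
        refine hmem x fun z hz => ?_
        have hzpol : -z ∈ polarCone K := by
          intro w hw
          have := hz w hw
          rw [inner_neg_left]
          have h := real_inner_comm z w
          linarith
        have := hperp2 x hx (-z) hzpol
        rw [inner_neg_left] at this
        linarith
      have hxK' : -x ∈ K := by
        refine hmem (-x) fun z hz => ?_
        have hzpol : -z ∈ polarCone K := by
          intro w hw
          have := hz w hw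
          rw [inner_neg_left]
          have h := real_inner_comm z w
          linarith
        have := hperp2 x hx (-z) hzpol
        rw [inner_neg_left] at this
        rw [inner_neg_right]
        linarith
      exact Submodule.subset_span ⟨hxK, by simpa using hxK'⟩
  -- conclude
  have h1 : Lᗮ ≤ P := by
    have := Submodule.orthogonal_le hPperpL
    rwa [Submodule.orthogonal_orthogonal] at this
  have h2 : P = Lᗮ := le_antisymm hPL h1
  rw [h2]
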